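/- Unidimensional cost with negative initial speed: let u : ℤ with u < 0 and let D : ℕ. Then the least k ≥ 1 for which there exists v : Fin k → ℤ with |v 0 - u| ≤ 1, |v (i+1) - v i| ≤ 1 for all i, v (k-1) = 0, and ∑ i, v i = D, is equal to (-u) + ⌈2·√(D + u·(u+1)/2)⌉. (That is, it is optimal to first decelerate to zero speed, which takes -u vectors and moves the vehicle back by u·(u+1)/2 units, and then cover the remaining distance D + u·(u+1)/2 from rest to rest at optimal cost ⌈2·√(D + u·(u+1)/2)⌉.) -/

import Mathlib

open Finset

lemma gaussZ (n : ℕ) : ∑ i ∈ range n, (i:ℤ) = n*(n-1)/2 := by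
  induction n with
  | zero => simp
  | succ n ih =>
    rw [sum_range_succ, ih]
    obtain ⟨c, hc⟩ := Int.even_mul_succ_self (n:ℤ)
    have h2 : ((n:ℤ)+1) * ((n:ℤ)+1-1) = n*(n-1) + 2*n := by ring
    push_cast
    omega

lemma F0 (t : ℕ) : ∑ i ∈ range t, min ((i:ℤ)+1) ((t:ℤ)-1-i) = (t:ℤ)^2/4 := by
  induction t using Nat.strong_induction_on with
  | _ t ih =>
    match t with
    | 0 => simp
    | 1 => norm_num
    | (n+2) =>
      rw [sum_range_succ, sum_range_succ']
      have h1 : ∑ k ∈ range n, (((k+1:ℕ):ℤ)+1) ⊓ (((n+2:ℕ):ℤ)-1-((k+1:ℕ):ℤ))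
          = ∑ k ∈ range n, ((((k:ℕ):ℤ)+1) ⊓ (((n:ℕ):ℤ)-1-(k:ℕ)) + 1) := by
        refine sum_congr rfl fun k hk => ?_
        push_cast
        omega
      rw [h1, sum_add_distrib, ih n (by omega)]
      simp only [sum_const, card_range, nsmul_eq_mul, mul_one]
      have h2 : ((n+2:ℕ):ℤ)^2 = (n:ℤ)^2 + 4*(n+1) := by push_cast; ring
      push_cast at h2 ⊢
      omega

lemma evenZ (m : ℤ) : Even (m*(m-1)) := by
  rcases Int.even_or_odd m with h | h
  · exact h.mul_right _
  · exact ((h.sub_odd odd_one).mul_left _)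

lemma Fm (m t : ℕ) : ∑ i ∈ range (m+t), min ((i:ℤ)+1-m) ((m:ℤ)+t-1-i)
    = (t:ℤ)^2/4 - (m:ℤ)*(m-1)/2 := by
  induction m with
  | zero => simpa using F0 t
  | succ m ih =>
    have h0 : (m+1)+t = (m+t)+1 := by omega
    rw [h0, sum_range_succ']
    have h1 : ∑ k ∈ range (m+t), (((k+1:ℕ):ℤ)+1-((m+1:ℕ):ℤ)) ⊓ (((m+1:ℕ):ℤ)+t-1-((k+1:ℕ):ℤ))
        = ∑ k ∈ range (m+t), ((k:ℤ)+1-(m:ℤ)) ⊓ ((m:ℤ)+t-1-k) := by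
      refine sum_congr rfl fun k hk => ?_
      push_cast
      omega
    rw [h1, ih]
    obtain ⟨c, hc⟩ := evenZ (m:ℤ)
    have h2 : ((m+1:ℕ):ℤ) * (((m+1:ℕ):ℤ)-1) = (m:ℤ)*((m:ℤ)-1) + 2*m := by push_cast; ring
    push_cast at *
    omega

lemma B0 (t : ℕ) : ∑ i ∈ range t, min ((i:ℤ)) ((t:ℤ)-1-i) = ((t:ℤ)-1)^2/4 := by
  match t with
  | 0 => simp
  | (s+1) =>
    rw [sum_range_succ']
    have h1 : ∑ k ∈ range s, (((k+1:ℕ):ℤ)) ⊓ (((s+1:ℕ):ℤ)-1-((k+1:ℕ):ℤ))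
        = ∑ k ∈ range s, ((k:ℤ)+1) ⊓ ((s:ℤ)-1-k) := by
      refine sum_congr rfl fun k hk => ?_
      push_cast; omega
    rw [h1, F0]
    have h3 : ((s+1:ℕ):ℤ) - 1 = (s:ℤ) := by push_cast; ring
    rw [h3]
    have h0 : (((0:ℕ)):ℤ) ⊓ ((s:ℤ)-((0:ℕ):ℤ)) = 0 := by push_cast; omega
    rw [h0, add_zero]

lemma countc (c t : ℕ) (h : c ≤ t) : ∑ i ∈ range t, (if i < c then (1:ℤ) else 0) = c := by
  induction t with
  | zero => interval_cases c <;> simp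
  | succ t ih =>
    rcases Nat.lt_or_ge t c with h2 | h2
    · have hc : c = t+1 := by omega
      subst hc
      have hall : ∀ i ∈ range (t+1), (if i < t+1 then (1:ℤ) else 0) = 1 :=
        fun i hi => if_pos (mem_range.mp hi)
      rw [sum_congr rfl hall]; simp
    · rw [sum_range_succ, ih h2, if_neg (by omega), add_zero]

lemma ceil_sqrt (E t : ℕ) : ⌈2 * Real.sqrt E⌉₊ ≤ t ↔ 4*E ≤ t^2 := by
  rw [Nat.ceil_le]
  have h2 : 2 * Real.sqrt E = Real.sqrt (4*E) := by
    rw [show ((4:ℝ)*E) = 2^2 * E by ring, Real.sqrt_mul (by positivity), Real.sqrt_sq (by norm_num)]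
  rw [h2]
  rw [show ((t:ℝ)) = Real.sqrt ((t:ℝ)^2) from (Real.sqrt_sq (by positivity)).symm]
  rw [Real.sqrt_le_sqrt_iff (by positivity)]
  constructor
  · intro h; exact_mod_cast h
  · intro h; exact_mod_cast h

lemma halfsq (s : ℕ) : s^2/4 + (s+1)/2 = (s+1)^2/4 := by
  rcases Nat.even_or_odd' s with ⟨q, hq | hq⟩ <;> subst hq
  · have h1 : (2*q)^2 = 4*q^2 := by ring
    have h2 : (2*q+1)^2 = 4*(q^2+q)+1 := by ring
    omega
  · have h1 : (2*q+1)^2 = 4*(q^2+q)+1 := by ring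
    have h2 : (2*q+1+1)^2 = 4*(q^2+2*q+1) := by ring
    omega

theorem vtsp_one_dim_cost_negative_speed (u : ℤ) (hu : u < 0) (D : ℕ) :
    IsLeast {k : ℕ | 1 ≤ k ∧ ∃ v : Fin k → ℤ,
        (∀ h : 0 < k, |v ⟨0, h⟩ - u| ≤ 1 ∧ v ⟨k - 1, Nat.sub_lt h one_pos⟩ = 0) ∧
        (∀ (i : ℕ) (h : i + 1 < k), |v ⟨i + 1, h⟩ - v ⟨i, by omega⟩| ≤ 1) ∧
        (∑ i, v i = (D : ℤ))}
      ((-u).toNat + ⌈2 * Real.sqrt (((D : ℤ) + u * (u + 1) / 2 : ℤ) : ℝ)⌉₊) := by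
  set m : ℕ := (-u).toNat with hm
  have hm1 : 1 ≤ m := by omega
  have hum : u = -(m:ℤ) := by omega
  obtain ⟨p, hp⟩ := evenZ (m:ℤ)
  have hcast : ((m*(m-1)/2 : ℕ):ℤ) = (m:ℤ)*((m:ℤ)-1)/2 := by
    rw [Int.natCast_ediv]
    push_cast [Nat.cast_sub hm1]
    norm_num
  set E : ℕ := D + m*(m-1)/2 with hEdef
  have hEZ : ((D : ℤ) + u * (u + 1) / 2) = (E:ℤ) := by
    have h1 : u*(u+1) = (m:ℤ)*((m:ℤ)-1) := by rw [hum]; ring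
    rw [h1, hEdef]
    push_cast [hcast]
    ring
  rw [hEZ]
  have hER : (((E:ℤ)):ℝ) = (E:ℝ) := by push_cast; ring
  rw [hER]
  set t : ℕ := ⌈2 * Real.sqrt (E:ℝ)⌉₊ with htdef
  have ht2 : 4*E ≤ t^2 := (ceil_sqrt E t).mp le_rfl
  have ht1 : ∀ s, t = s + 1 → s^2 < 4*E := by
    intro s hs
    by_contra h
    have := (ceil_sqrt E s).mpr (by omega)
    omega
  constructor
  · -- membership
    refine ⟨by omega, ?_⟩
    set c : ℕ := E - (t-1)^2/4 with hcdef
    have hE0 : t = 0 → E = 0 := by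
      intro h
      rw [h] at ht2
      norm_num at ht2
      omega
    have hcE : (t-1)^2/4 + c = E := by
      rcases Nat.eq_zero_or_pos t with h | h
      · have hE := hE0 h
        rw [h]
        norm_num
        omega
      · have h1 := ht1 (t-1) (by omega)
        have h2 : (t-1)^2/4 < E := by omega
        omega
    have hct : 2*c ≤ t := by
      rcases Nat.eq_zero_or_pos t with h | h
      · have : E = 0 := by omega
        omega
      · obtain ⟨s, hs⟩ : ∃ s, t = s+1 := ⟨t-1, by omega⟩
        have hh := halfsq s
        have hE4 : E ≤ (s+1)^2/4 := by
          rw [← hs]; omega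
        have hc' : c ≤ (s+1)/2 := by
          rw [hcdef, hs]; simp only [Nat.add_sub_cancel]; omega
        omega
    have hct' : 2*(c:ℤ) ≤ (t:ℤ) := by exact_mod_cast hct
    set w : ℕ → ℤ := fun i =>
      if i < m then u+1+(i:ℤ)
      else (min ((i:ℤ)-m) ((m:ℤ)+t-1-i) + if (i:ℤ)-m < (c:ℤ) then 1 else 0) with hw
    refine ⟨fun i => w i.val, fun _ => ⟨?_, ?_⟩, ?_, ?_⟩
    · -- |w 0 - u| ≤ 1
      simp only [hw, if_pos (show 0 < m by omega)]
      rw [abs_le]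
      push_cast
      omega
    · -- w (m+t-1) = 0
      rcases Nat.eq_zero_or_pos t with h | h
      · simp only [hw, h, Nat.add_zero, if_pos (show m-1 < m by omega)]
        push_cast [Nat.cast_sub hm1]
        omega
      · simp only [hw, if_neg (show ¬ (m+t-1 < m) by omega)]
        have hc1 : ((m+t-1:ℕ):ℤ) = (m:ℤ)+t-1 := by omega
        rw [hc1]
        split_ifs <;> omega
    · -- steps
      intro i h
      simp only [hw]
      rw [abs_le]
      split_ifs <;> push_cast <;> omega
    · -- sum
      rw [show (∑ i : Fin (m+t), w i.val) = ∑ i ∈ range (m+t), w i from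
        Fin.sum_univ_eq_sum_range (fun i => w i) (m+t)]
      rw [Finset.sum_range_add]
      have hA : ∑ i ∈ range m, w i = (m:ℤ)*(u+1) + (m:ℤ)*((m:ℤ)-1)/2 := by
        have h1 : ∀ i ∈ range m, w i = (u+1) + (i:ℤ) := by
          intro i hi
          simp only [hw, if_pos (mem_range.mp hi)]
        rw [sum_congr rfl h1, sum_add_distrib, gaussZ, sum_const, card_range,
          nsmul_eq_mul]
      have hB : ∑ i ∈ range t, w (m+i) = ((t:ℤ)-1)^2/4 + (c:ℤ) := by
        have h1 : ∀ i ∈ range t, w (m+i)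
            = min ((i:ℤ)) ((t:ℤ)-1-i) + (if i < c then (1:ℤ) else 0) := by
          intro i hi
          simp only [hw, if_neg (show ¬ (m+i < m) by omega)]
          congr 1
          · congr 1 <;> push_cast <;> ring
          · refine if_congr ?_ rfl rfl
            constructor <;> intro h2
            · push_cast at h2; omega
            · push_cast; omega
        rw [sum_congr rfl h1, sum_add_distrib, B0, countc c t (by omega)]
      rw [hA, hB]
      have hq : (m:ℤ)*(u+1) = -((m:ℤ)*((m:ℤ)-1)) := by rw [hum]; ring
      have hc2 : ((t:ℤ)-1)^2/4 = (((t-1)^2/4 : ℕ):ℤ) := by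
        rcases Nat.eq_zero_or_pos t with h | h
        · rw [h]
          norm_num
        · obtain ⟨s, hs⟩ : ∃ s, t = s+1 := ⟨t-1, by omega⟩
          rw [hs]
          rw [Int.natCast_ediv]
          push_cast
          ring_nf
      rw [hq, hc2]
      have hcE' : (((t-1)^2/4 : ℕ):ℤ) + (c:ℤ) = (E:ℤ) := by exact_mod_cast hcE
      have hE' : (E:ℤ) = (D:ℤ) + ((m*(m-1)/2 : ℕ):ℤ) := by rw [hEdef]; push_cast; ring
      rw [hcast] at hE'
      omega
  · -- lower bound
    rintro k ⟨hk1, v, hends, hstep, hsum⟩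
    have h0 := (hends (by omega)).1
    have hlast := (hends (by omega)).2
    set w : ℕ → ℤ := fun i => if h : i < k then v ⟨i,h⟩ else 0 with hw
    have hw0 : |w 0 - u| ≤ 1 := by
      simpa only [hw, dif_pos (show 0 < k by omega)] using h0
    have hwlast : w (k-1) = 0 := by
      simpa only [hw, dif_pos (show k-1 < k by omega)] using hlast
    have hwstep : ∀ i, i+1 < k → |w (i+1) - w i| ≤ 1 := by
      intro i h
      simpa only [hw, dif_pos h, dif_pos (show i < k by omega)] using hstep i h
    have hwsum : ∑ i ∈ range k, w i = (D:ℤ) := by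
      rw [← hsum, ← Fin.sum_univ_eq_sum_range (fun i => w i) k]
      refine sum_congr rfl fun i _ => ?_
      simp only [hw, dif_pos i.isLt]
    have upA : ∀ i, i < k → w i ≤ (i:ℤ)+1-m := by
      intro i
      induction i with
      | zero =>
        intro _
        have h2 := abs_le.mp hw0
        push_cast
        omega
      | succ n ih =>
        intro h
        have h2 := abs_le.mp (hwstep n h)
        have h3 := ih (by omega)
        push_cast at *
        omega
    have upB : ∀ j, j < k → w (k-1-j) ≤ (j:ℤ) := by
      intro j
      induction j with
      | zero =>
        intro _
        simpa using hwlast.le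
      | succ n ih =>
        intro h
        have hih := ih (by omega)
        have h2 := abs_le.mp (hwstep (k-1-(n+1)) (by omega))
        have he : k-1-(n+1)+1 = k-1-n := by omega
        rw [he] at h2
        push_cast at *
        omega
    have hmk : m ≤ k := by
      have h2 := upA (k-1) (by omega)
      rw [hwlast] at h2
      omega
    have hkey : (D:ℤ) ≤ ((k-m:ℕ):ℤ)^2/4 - (m:ℤ)*((m:ℤ)-1)/2 := by
      have hF := Fm m (k-m)
      rw [show m + (k-m) = k by omega] at hF
      rw [← hF, ← hwsum]
      refine sum_le_sum fun i hi => ?_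
      have hik := mem_range.mp hi
      have hiu := upA i hik
      have hj := upB (k-1-i) (by omega)
      rw [show k-1-(k-1-i) = i by omega] at hj
      omega
    have h4E : 4*E ≤ (k-m)^2 := by
      have hc2 : ((k-m:ℕ):ℤ)^2 = (((k-m)^2 : ℕ):ℤ) := by push_cast; ring
      rw [hc2] at hkey
      have hE' : (E:ℤ) = (D:ℤ) + ((m*(m-1)/2 : ℕ):ℤ) := by rw [hEdef]; push_cast; ring
      rw [hcast] at hE'
      have hz : 4*(E:ℤ) ≤ (((k-m)^2 : ℕ):ℤ) := by omega
      exact_mod_cast hz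
    have hfin := (ceil_sqrt E (k-m)).mpr h4E
    omega
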